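/- Consider the 3×3 bimatrix game with pure payoffs u, v : Fin 3 × Fin 3 → ℝ given (rows indexing player 1) by u = [[2,-10,3],[3,2,-10],[-10,3,2]] and v = [[1,-10,0],[0,1,-10],[-10,0,1]], and its mixed extension G on X = Y = stdSimplex ℝ (Fin 3) with U(p,q) = Σ_{a,b} p_a q_b u(a,b) and V(p,q) = Σ_{a,b} p_a q_b v(a,b). Then there exists a (0,0)-feasible contract (for instance both players putting all mass on their second pure strategy yields payoffs (2,1)), but there exists no (0,0)-constrained Nash equilibrium. In particular, G is not feasible. -/

import Mathlib

/-- A two-player game over strategy sets `X ⊆ E`, `Y ⊆ F` with payoffs `U, V` is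
feasible: for every pair of outside options admitting a feasible contract, there
exists a constrained Nash equilibrium. -/
def FeasibleOn {E F : Type*} (X : Set E) (Y : Set F) (U V : E → F → ℝ) : Prop :=
  ∀ u0 v0 : ℝ, (∃ x ∈ X, ∃ y ∈ Y, u0 ≤ U x y ∧ v0 ≤ V x y) →
    ∃ x' ∈ X, ∃ y' ∈ Y, u0 ≤ U x' y' ∧ v0 ≤ V x' y' ∧
      (∀ x ∈ X, U x' y' < U x y' → V x y' < v0) ∧
      (∀ y ∈ Y, V x' y' < V x' y → U x' y < u0)

/-- Payoff of player 1 in the mixed extension of Solan's 3×3 game. -/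
noncomputable def solanU (p q : Fin 3 → ℝ) : ℝ :=
  ∑ a : Fin 3, ∑ b : Fin 3, p a * q b * (!![(2:ℝ), -10, 3; 3, 2, -10; -10, 3, 2] a b)

/-- Payoff of player 2 in the mixed extension of Solan's 3×3 game. -/
noncomputable def solanV (p q : Fin 3 → ℝ) : ℝ :=
  ∑ a : Fin 3, ∑ b : Fin 3, p a * q b * (!![(1:ℝ), -10, 0; 0, 1, -10; -10, 0, 1] a b)

lemma solanU_eval (p q : Fin 3 → ℝ) : solanU p q =
    p 0*(2*q 0-10*q 1+3*q 2) + p 1*(3*q 0+2*q 1-10*q 2) + p 2*(-10*q 0+3*q 1+2*q 2) := by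
  simp [solanU, Fin.sum_univ_three]; ring

lemma solanV_eval (p q : Fin 3 → ℝ) : solanV p q =
    p 0*(q 0-10*q 1) + p 1*(q 1-10*q 2) + p 2*(q 2-10*q 0) := by
  simp [solanV, Fin.sum_univ_three]; ring

lemma solan_mem0 : (![(1:ℝ),0,0]) ∈ stdSimplex ℝ (Fin 3) :=
  ⟨fun i => by fin_cases i <;> norm_num, by simp [Fin.sum_univ_three]⟩
lemma solan_mem1 : (![(0:ℝ),1,0]) ∈ stdSimplex ℝ (Fin 3) :=
  ⟨fun i => by fin_cases i <;> norm_num, by simp [Fin.sum_univ_three]⟩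
lemma solan_mem2 : (![(0:ℝ),0,1]) ∈ stdSimplex ℝ (Fin 3) :=
  ⟨fun i => by fin_cases i <;> norm_num, by simp [Fin.sum_univ_three]⟩

/-- Weighted-average lemma: if `V` is a convex combination of `c0, c1, c2`, two of which
are `≤ V`, and the weight of `c1` is positive, then `V ≤ c1`. -/
lemma solan_wavg (V c0 c1 c2 a0 a1 a2 : ℝ) (h : V = a0*c0 + a1*c1 + a2*c2)
    (hsum : a0 + a1 + a2 = 1) (h0 : 0 ≤ a0) (h2 : 0 ≤ a2) (hp : 0 < a1)
    (l0 : c0 ≤ V) (l2 : c2 ≤ V) : V ≤ c1 := by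
  by_contra hlt; push_neg at hlt
  have hs2 : (a0 + a1 + a2) * V = V := by rw [hsum, one_mul]
  nlinarith [mul_nonneg h0 (sub_nonneg.2 l0), mul_nonneg h2 (sub_nonneg.2 l2),
    mul_pos hp (by linarith : 0 < V - c1), hs2]

/-- Core arithmetic contradiction.  Relative to an index `b` with `q (b-1) = 0`:
`pB1 = p (b-1)`, `pB = p b`, `pB2 = p (b+1)`, `s = q b > 0`, `t = q (b+1)`.
`hV` says `C_b ≥ 0`, `hC1` says `C_(b+1) ≤ C_b`, and `hdev` says the pure
deviation of player 1 to `b+1` is not profitable. -/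
lemma solan_key (pB1 pB pB2 s t : ℝ) (h0 : 0 ≤ pB1) (h1 : 0 ≤ pB) (_h2 : 0 ≤ pB2)
    (hsum : pB1 + pB + pB2 = 1) (hs : 0 < s) (ht : 0 ≤ t) (hqs : s + t = 1)
    (hV : 0 ≤ pB - 10*pB1) (hC1 : pB2 - 10*pB ≤ pB - 10*pB1)
    (hdev : 2*t + 3*s ≤ pB*(2*s - 10*t) + pB2*(2*t+3*s) + pB1*(3*t-10*s)) : False := by
  have e1 : 0 ≤ pB*(-s - 12*t) + pB1*(t - 13*s) := by nlinarith [hdev]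
  have e2 : 0 ≤ (pB - 10*pB1) * (s + 12*t) := mul_nonneg hV (by linarith)
  have e3 : 0 ≤ pB1 * (-(23*s) - 119*t) := by nlinarith [e1, e2]
  have e4 : pB1 = 0 := by nlinarith [mul_nonneg h0 (by linarith : (0:ℝ) ≤ 23*s + 119*t)]
  have e5 : pB = 0 := by nlinarith [e1, mul_nonneg h1 (by linarith : (0:ℝ) ≤ s + 12*t)]
  have : pB2 ≤ 0 := by linarith [hC1, e4, e5]
  linarith

set_option maxHeartbeats 2000000 in
/-- The game admits no `(0,0)`-constrained Nash equilibrium. -/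
lemma solan_no_cne :
    ¬ ∃ p ∈ stdSimplex ℝ (Fin 3), ∃ q ∈ stdSimplex ℝ (Fin 3),
        (0 : ℝ) ≤ solanU p q ∧ (0 : ℝ) ≤ solanV p q ∧
        (∀ p' ∈ stdSimplex ℝ (Fin 3), solanU p q < solanU p' q → solanV p' q < 0) ∧
        (∀ q' ∈ stdSimplex ℝ (Fin 3), solanV p q < solanV p q' → solanU p q' < 0) := by
  rintro ⟨p, ⟨hpnn, hpsum⟩, q, ⟨hqnn, hqsum⟩, hU, hV, h1, h2⟩
  have hps : p 0 + p 1 + p 2 = 1 := by simpa [Fin.sum_univ_three] using hpsum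
  have hqs : q 0 + q 1 + q 2 = 1 := by simpa [Fin.sum_univ_three] using hqsum
  have hp0 := hpnn 0; have hp1 := hpnn 1; have hp2 := hpnn 2
  have hq0 := hqnn 0; have hq1 := hqnn 1; have hq2 := hqnn 2
  -- payoffs of player 2 against her pure strategies
  have hC0 : solanV p ![1,0,0] = p 0 - 10 * p 2 := by rw [solanV_eval]; norm_num [Matrix.cons_val_two]; ring
  have hC1v : solanV p ![0,1,0] = p 1 - 10 * p 0 := by rw [solanV_eval]; norm_num [Matrix.cons_val_two]; ring
  have hC2 : solanV p ![0,0,1] = p 2 - 10 * p 1 := by rw [solanV_eval]; norm_num [Matrix.cons_val_two]; ring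
  have hE0 : solanU p ![1,0,0] = 2*p 0 + 3*p 1 - 10*p 2 := by rw [solanU_eval]; norm_num [Matrix.cons_val_two]; ring
  have hE1 : solanU p ![0,1,0] = -10*p 0 + 2*p 1 + 3*p 2 := by rw [solanU_eval]; norm_num [Matrix.cons_val_two]; ring
  have hE2 : solanU p ![0,0,1] = 3*p 0 - 10*p 1 + 2*p 2 := by rw [solanU_eval]; norm_num [Matrix.cons_val_two]; ring
  set V := solanV p q with hVdef
  -- Step 1: every pure payoff of player 2 is at most V, since player 1's payoff
  -- pointwise dominates player 2's payoff.
  have s0 : p 0 - 10 * p 2 ≤ V := by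
    by_contra h; push_neg at h
    have := h2 ![1,0,0] solan_mem0 (by rw [hC0]; exact h)
    rw [hE0] at this; linarith
  have s1 : p 1 - 10 * p 0 ≤ V := by
    by_contra h; push_neg at h
    have := h2 ![0,1,0] solan_mem1 (by rw [hC1v]; exact h)
    rw [hE1] at this; linarith
  have s2 : p 2 - 10 * p 1 ≤ V := by
    by_contra h; push_neg at h
    have := h2 ![0,0,1] solan_mem2 (by rw [hC2]; exact h)
    rw [hE2] at this; linarith
  -- V as the q-weighted combination of the pure payoffs
  have hVq : V = q 0 * (p 0 - 10*p 2) + q 1 * (p 1 - 10*p 0) + q 2 * (p 2 - 10*p 1) := by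
    rw [hVdef, solanV_eval]; ring
  -- payoffs against player 1's pure strategies
  have hB0 : solanV ![1,0,0] q = q 0 - 10 * q 1 := by rw [solanV_eval]; norm_num [Matrix.cons_val_two]
  have hB1 : solanV ![0,1,0] q = q 1 - 10 * q 2 := by rw [solanV_eval]; norm_num [Matrix.cons_val_two]
  have hB2 : solanV ![0,0,1] q = -10 * q 0 + q 2 := by rw [solanV_eval]; norm_num [Matrix.cons_val_two]; try ring
  have hA0 : solanU ![1,0,0] q = 2*q 0 - 10*q 1 + 3*q 2 := by rw [solanU_eval]; norm_num [Matrix.cons_val_two]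
  have hA1 : solanU ![0,1,0] q = 3*q 0 + 2*q 1 - 10*q 2 := by rw [solanU_eval]; norm_num [Matrix.cons_val_two]
  have hA2 : solanU ![0,0,1] q = -10*q 0 + 3*q 1 + 2*q 2 := by rw [solanU_eval]; norm_num [Matrix.cons_val_two]
  have hUe : solanU p q = p 0*(2*q 0-10*q 1+3*q 2) + p 1*(3*q 0+2*q 1-10*q 2)
      + p 2*(-10*q 0+3*q 1+2*q 2) := solanU_eval p q
  -- Locate an index b with q b > 0 and q (b-1) = 0, or get a direct contradiction.
  by_cases hz0 : q 0 = 0 <;> by_cases hz1 : q 1 = 0 <;> by_cases hz2 : q 2 = 0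
  · -- q = 0 : impossible
    rw [hz0, hz1, hz2] at hqs; norm_num at hqs
  · -- (0,0,+) : b = 2, deviation to e0
    have hq2p : 0 < q 2 := lt_of_le_of_ne hq2 (Ne.symm hz2)
    have hVle : V ≤ p 2 - 10 * p 1 :=
      solan_wavg V (p 0 - 10*p 2) (p 2 - 10*p 1) (p 1 - 10*p 0) (q 0) (q 2) (q 1)
        (by linarith [hVq]) (by linarith) hq0 hq1 hq2p s0 s1
    have hnd : solanU ![1,0,0] q ≤ solanU p q :=
      le_of_not_gt fun h => absurd (h1 ![1,0,0] solan_mem0 h) (by rw [hB0, hz1]; linarith)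
    rw [hA0, hUe] at hnd
    refine solan_key (p 1) (p 2) (p 0) (q 2) (q 0) hp1 hp2 hp0 (by linarith) hq2p hq0
      (by linarith) (by linarith) (by linarith) ?_
    rw [hz1] at hnd; linarith [hnd]
  · -- (0,+,0) : b = 1, deviation to e2
    have hq1p : 0 < q 1 := lt_of_le_of_ne hq1 (Ne.symm hz1)
    have hVle : V ≤ p 1 - 10 * p 0 :=
      solan_wavg V (p 0 - 10*p 2) (p 1 - 10*p 0) (p 2 - 10*p 1) (q 0) (q 1) (q 2)
        (by linarith [hVq]) (by linarith) hq0 hq2 hq1p s0 s2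
    have hnd : solanU ![0,0,1] q ≤ solanU p q :=
      le_of_not_gt fun h => absurd (h1 ![0,0,1] solan_mem2 h) (by rw [hB2, hz0]; linarith)
    rw [hA2, hUe] at hnd
    refine solan_key (p 0) (p 1) (p 2) (q 1) (q 2) hp0 hp1 hp2 (by linarith) hq1p hq2
      (by linarith) (by linarith) (by linarith) ?_
    rw [hz0] at hnd; linarith [hnd]
  · -- (0,+,+) : b = 1, deviation to e2
    have hq1p : 0 < q 1 := lt_of_le_of_ne hq1 (Ne.symm hz1)
    have hVle : V ≤ p 1 - 10 * p 0 :=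
      solan_wavg V (p 0 - 10*p 2) (p 1 - 10*p 0) (p 2 - 10*p 1) (q 0) (q 1) (q 2)
        (by linarith [hVq]) (by linarith) hq0 hq2 hq1p s0 s2
    have hnd : solanU ![0,0,1] q ≤ solanU p q :=
      le_of_not_gt fun h => absurd (h1 ![0,0,1] solan_mem2 h) (by rw [hB2, hz0]; linarith)
    rw [hA2, hUe] at hnd
    refine solan_key (p 0) (p 1) (p 2) (q 1) (q 2) hp0 hp1 hp2 (by linarith) hq1p hq2
      (by linarith) (by linarith) (by linarith) ?_
    rw [hz0] at hnd; linarith [hnd]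
  · -- (+,0,0) : b = 0, deviation to e1
    have hq0p : 0 < q 0 := lt_of_le_of_ne hq0 (Ne.symm hz0)
    have hVle : V ≤ p 0 - 10 * p 2 :=
      solan_wavg V (p 1 - 10*p 0) (p 0 - 10*p 2) (p 2 - 10*p 1) (q 1) (q 0) (q 2)
        (by linarith [hVq]) (by linarith) hq1 hq2 hq0p s1 s2
    have hnd : solanU ![0,1,0] q ≤ solanU p q :=
      le_of_not_gt fun h => absurd (h1 ![0,1,0] solan_mem1 h) (by rw [hB1, hz2]; linarith)
    rw [hA1, hUe] at hnd
    refine solan_key (p 2) (p 0) (p 1) (q 0) (q 1) hp2 hp0 hp1 (by linarith) hq0p hq1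
      (by linarith) (by linarith) (by linarith) ?_
    rw [hz2] at hnd; linarith [hnd]
  · -- (+,0,+) : b = 2, deviation to e0
    have hq2p : 0 < q 2 := lt_of_le_of_ne hq2 (Ne.symm hz2)
    have hVle : V ≤ p 2 - 10 * p 1 :=
      solan_wavg V (p 0 - 10*p 2) (p 2 - 10*p 1) (p 1 - 10*p 0) (q 0) (q 2) (q 1)
        (by linarith [hVq]) (by linarith) hq0 hq1 hq2p s0 s1
    have hnd : solanU ![1,0,0] q ≤ solanU p q :=
      le_of_not_gt fun h => absurd (h1 ![1,0,0] solan_mem0 h) (by rw [hB0, hz1]; linarith)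
    rw [hA0, hUe] at hnd
    refine solan_key (p 1) (p 2) (p 0) (q 2) (q 0) hp1 hp2 hp0 (by linarith) hq2p hq0
      (by linarith) (by linarith) (by linarith) ?_
    rw [hz1] at hnd; linarith [hnd]
  · -- (+,+,0) : b = 0, deviation to e1
    have hq0p : 0 < q 0 := lt_of_le_of_ne hq0 (Ne.symm hz0)
    have hVle : V ≤ p 0 - 10 * p 2 :=
      solan_wavg V (p 1 - 10*p 0) (p 0 - 10*p 2) (p 2 - 10*p 1) (q 1) (q 0) (q 2)
        (by linarith [hVq]) (by linarith) hq1 hq2 hq0p s1 s2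
    have hnd : solanU ![0,1,0] q ≤ solanU p q :=
      le_of_not_gt fun h => absurd (h1 ![0,1,0] solan_mem1 h) (by rw [hB1, hz2]; linarith)
    rw [hA1, hUe] at hnd
    refine solan_key (p 2) (p 0) (p 1) (q 0) (q 1) hp2 hp0 hp1 (by linarith) hq0p hq1
      (by linarith) (by linarith) (by linarith) ?_
    rw [hz2] at hnd; linarith [hnd]
  · -- (+,+,+) : all pure payoffs of player 2 equal V, but they sum to -9 < 0 ≤ 3V.
    have hq0p : 0 < q 0 := lt_of_le_of_ne hq0 (Ne.symm hz0)
    have hq1p : 0 < q 1 := lt_of_le_of_ne hq1 (Ne.symm hz1)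
    have hq2p : 0 < q 2 := lt_of_le_of_ne hq2 (Ne.symm hz2)
    have hVle0 : V ≤ p 0 - 10 * p 2 :=
      solan_wavg V (p 1 - 10*p 0) (p 0 - 10*p 2) (p 2 - 10*p 1) (q 1) (q 0) (q 2)
        (by linarith [hVq]) (by linarith) hq1 hq2 hq0p s1 s2
    have hVle1 : V ≤ p 1 - 10 * p 0 :=
      solan_wavg V (p 0 - 10*p 2) (p 1 - 10*p 0) (p 2 - 10*p 1) (q 0) (q 1) (q 2)
        (by linarith [hVq]) (by linarith) hq0 hq2 hq1p s0 s2
    have hVle2 : V ≤ p 2 - 10 * p 1 :=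
      solan_wavg V (p 0 - 10*p 2) (p 2 - 10*p 1) (p 1 - 10*p 0) (q 0) (q 2) (q 1)
        (by linarith [hVq]) (by linarith) hq0 hq1 hq2p s0 s1
    linarith

/-- The mixed extension of Solan's 3×3 game admits a `(0,0)`-feasible contract but
no `(0,0)`-constrained Nash equilibrium; in particular, it is not feasible. -/
theorem solan_game_not_feasible :
    (∃ p ∈ stdSimplex ℝ (Fin 3), ∃ q ∈ stdSimplex ℝ (Fin 3),
        (0 : ℝ) ≤ solanU p q ∧ (0 : ℝ) ≤ solanV p q) ∧
    (¬ ∃ p ∈ stdSimplex ℝ (Fin 3), ∃ q ∈ stdSimplex ℝ (Fin 3),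
        (0 : ℝ) ≤ solanU p q ∧ (0 : ℝ) ≤ solanV p q ∧
        (∀ p' ∈ stdSimplex ℝ (Fin 3), solanU p q < solanU p' q → solanV p' q < 0) ∧
        (∀ q' ∈ stdSimplex ℝ (Fin 3), solanV p q < solanV p q' → solanU p q' < 0)) ∧
    ¬ FeasibleOn (stdSimplex ℝ (Fin 3)) (stdSimplex ℝ (Fin 3)) solanU solanV := by
  have hfeas : ∃ p ∈ stdSimplex ℝ (Fin 3), ∃ q ∈ stdSimplex ℝ (Fin 3),
      (0 : ℝ) ≤ solanU p q ∧ (0 : ℝ) ≤ solanV p q := by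
    refine ⟨![0,1,0], solan_mem1, ![0,1,0], solan_mem1, ?_, ?_⟩
    · rw [solanU_eval]; norm_num [Matrix.cons_val_two]
    · rw [solanV_eval]; norm_num [Matrix.cons_val_two]
  refine ⟨hfeas, solan_no_cne, fun hF => ?_⟩
  obtain ⟨p, hp, q, hq, h⟩ := hF 0 0 hfeas
  exact solan_no_cne ⟨p, hp, q, hq, h⟩
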